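/- arXiv:math/0504531 — 2 statements merged into one kernel-verified Lean document; each statement's English description precedes it below -/
import Mathlib

section
/- In the shuffle algebra (K{X}_ω, ⧢) dual to the free Mag_ω-Hopf algebra, the product of n distinct variables satisfies x_1 ⧢ x_2 ⧢ ⋯ ⧢ x_n = ∑_{T} ∑_{σ ∈ Σ_n} T^σ, where T ranges over unlabeled planar reduced trees with n leaves and T^σ is T with its i-th leaf labeled x_{σ(i)}. -/
noncomputable section

/-- A planar reduced rooted tree with leaves labeled by `X` and all vertex arities
at most `N` (and at least 2): the tree monomials of the free `Mag_N`-algebra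
(`N = ⊤` gives the operad `Mag_ω` of Stasheff polytopes, `N = 2` gives `Mag`). -/
inductive PT (X : Type) (N : ℕ∞) : Type
  | leaf : X → PT X N
  | node : (k : ℕ) → 2 ≤ k → (k : ℕ∞) ≤ N → (Fin k → PT X N) → PT X N

namespace PT

variable {X : Type} {N : ℕ∞}

/-- Number of leaves. -/
def nLeaves : PT X N → ℕ
  | .leaf _ => 1
  | .node k _ _ f => ∑ i : Fin k, nLeaves (f i)

/-- The list of leaf labels, from left to right. -/
def leafList : PT X N → List X
  | .leaf x => [x]
  | .node k _ _ f => ((List.finRange k).map fun i => leafList (f i)).flatten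

end PT

/-- The monomial basis of the free unitary `Mag_N`-algebra: tree monomials together
with the empty tree `none` (the unit `1`). -/
abbrev OT (X : Type) (N : ℕ∞) := Option (PT X N)

/-- The free unitary `Mag_N`-algebra `K{X}_N` on the monomial basis `OT X N`;
via this basis it is identified with its graded dual. -/
abbrev FA (K X : Type) (N : ℕ∞) [Semiring K] := OT X N →₀ K

/-- Grafting of a list of monomials (with the coherent unit action): unit factors are
discarded, the empty grafting is the unit, grafting a single tree is that tree
(contraction of a unary vertex), and otherwise a new root is introduced. -/
def graftB {X : Type} {N : ℕ∞} (l : List (OT X N)) : OT X N :=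
  match l.reduceOption with
  | [] => none
  | [t] => some t
  | l' => if h : 2 ≤ l'.length ∧ (l'.length : ℕ∞) ≤ N then
      some (.node l'.length h.1 h.2 l'.get) else none

/-- Degree (leaf count) of a basis monomial; the unit has degree 0. -/
def degOT {X : Type} {N : ℕ∞} : OT X N → ℕ
  | none => 0
  | some t => t.nLeaves

/-- Multilinear extension helper: `tup [f₁,…,fₙ]` is the element `f₁ ⊗ ⋯ ⊗ fₙ` on the
basis of lists. -/
def tup {K : Type} [Semiring K] {α : Type} : List (α →₀ K) → (List α →₀ K)
  | [] => Finsupp.single [] 1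
  | g :: r => g.sum fun s c => c • (tup r).mapDomain (List.cons s)

/-- The `n`-ary grafting operation `∨ⁿ` of `K{X}_N`, as a multilinear map. -/
def G {K X : Type} {N : ℕ∞} [Semiring K] (l : List (FA K X N)) : FA K X N :=
  (tup l).mapDomain graftB

/-- Componentwise grafting on pairs of monomials. -/
def graftB2 {X : Type} {N : ℕ∞} (l : List (OT X N × OT X N)) : OT X N × OT X N :=
  (graftB (l.map Prod.fst), graftB (l.map Prod.snd))

/-- The `n`-ary grafting operation on `K{X}_N ⊗ K{X}_N` (componentwise product;
`single (s, t)` corresponds to `s ⊗ t`). -/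
def G2 {K X : Type} {N : ℕ∞} [Semiring K] (l : List ((OT X N × OT X N) →₀ K)) :
    (OT X N × OT X N) →₀ K :=
  (tup l).mapDomain graftB2

/-- `red T I`: restriction of the tree `T` to the leaf subset `I` (leaves are numbered
from `0` from the left): vertices and edges not on a path from a leaf in `I` to the
root are deleted and unary vertices are contracted; the unit if nothing survives. -/
def red {X : Type} {N : ℕ∞} : PT X N → Finset ℕ → OT X N
  | .leaf x, I => if 0 ∈ I then some (.leaf x) else none
  | .node k _ _ f, I =>
      graftB ((List.finRange k).map fun i =>
        let off : ℕ := ∑ j ∈ Finset.univ.filter (fun j : Fin k => j < i), (f j).nLeaves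
        red (f i) (((I.filter fun m => off ≤ m ∧ m < off + (f i).nLeaves)).image
          (· - off)))

/-- `f` is primitive: `Δ(f) = f ⊗ 1 + 1 ⊗ f`. -/
def IsPrim {K X : Type} {N : ℕ∞} [Semiring K]
    (Δ : FA K X N →ₗ[K] ((OT X N × OT X N) →₀ K)) (f : FA K X N) : Prop :=
  Δ f = f.mapDomain (fun a => (a, (none : OT X N))) +
    f.mapDomain (fun a => ((none : OT X N), a))

/-- `f` is homogeneous of degree `n` (each monomial in its support has `n` leaves). -/
def Homog {K X : Type} {N : ℕ∞} [Semiring K] (f : FA K X N) (n : ℕ) : Prop :=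
  ∀ t ∈ f.support, degOT t = n

/-- The canonical pairing on `K{X}_N` making the monomial basis orthonormal. -/
def pairF {K X : Type} {N : ℕ∞} [Semiring K] (f g : FA K X N) : K :=
  f.sum fun t c => c * g t


/- ========================= auxiliary development ========================= -/

section Aux

open scoped Classical

/-- Leaf list of an optional tree. -/
def leafListO {X : Type} {N : ℕ∞} : OT X N → List X
  | none => []
  | some t => t.leafList

@[simp] lemma leafListO_none {X : Type} {N : ℕ∞} : leafListO (none : OT X N) = [] := rfl
@[simp] lemma leafListO_some {X : Type} {N : ℕ∞} (t : PT X N) : leafListO (some t) = t.leafList := rfl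

/-- Auxiliary form of `graftB` acting on the already-reduced list. -/
def graftAux {X : Type} {N : ℕ∞} (l : List (PT X N)) : OT X N :=
  match l with
  | [] => none
  | [t] => some t
  | l' => if h : 2 ≤ l'.length ∧ (l'.length : ℕ∞) ≤ N then
      some (.node l'.length h.1 h.2 l'.get) else none

lemma graftB_eq {X : Type} {N : ℕ∞} (l : List (OT X N)) : graftB l = graftAux l.reduceOption := rfl

lemma PT.node_ext {X : Type} {N : ℕ∞} {k k' : ℕ} (h : k = k') (h2 : 2 ≤ k) (h2' : 2 ≤ k')
    (hN : (k : ℕ∞) ≤ N) (hN' : (k' : ℕ∞) ≤ N) (f : Fin k → PT X N) (f' : Fin k' → PT X N)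
    (hf : ∀ i : Fin k', f (Fin.cast h.symm i) = f' i) :
    PT.node k h2 hN f = PT.node k' h2' hN' f' := by
  subst h
  have : f = f' := funext fun i => hf i
  subst this
  rfl

section Top
variable {X : Type}

lemma graftAux_cons_cons (a b : PT X ⊤) (r : List (PT X ⊤)) :
    graftAux (a :: b :: r) = some (.node (a :: b :: r).length (by simp) le_top
      (a :: b :: r).get) := by
  have h : 2 ≤ (a :: b :: r).length ∧ ((a :: b :: r).length : ℕ∞) ≤ ⊤ :=
    ⟨by simp, le_top⟩
  simp only [graftAux, dif_pos h]

lemma graftB_eq_none_iff (l : List (OT X ⊤)) : graftB l = none ↔ l.reduceOption = [] := by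
  rw [graftB_eq]
  match h : l.reduceOption with
  | [] => simp [graftAux]
  | [t] => simp [graftAux]
  | a :: b :: r => rw [graftAux_cons_cons]; simp

lemma graftB_eq_leaf_iff (l : List (OT X ⊤)) (x : X) :
    graftB l = some (.leaf x) ↔ l.reduceOption = [.leaf x] := by
  rw [graftB_eq]
  match h : l.reduceOption with
  | [] => simp [graftAux]
  | [t] => simp only [graftAux]; constructor
           · rintro h; cases h; rfl
           · rintro h; cases h; rfl
  | a :: b :: r => rw [graftAux_cons_cons]; simp

@[simp] lemma graftB_cons_none (l : List (OT X ⊤)) : graftB (none :: l) = graftB l := by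
  rw [graftB_eq, graftB_eq, List.reduceOption_cons_of_none]

lemma graftB_cons_some_ne_none (u : PT X ⊤) (l : List (OT X ⊤)) :
    graftB (some u :: l) ≠ none := by
  rw [Ne, graftB_eq_none_iff, List.reduceOption_cons_of_some]
  simp

lemma graftB_cons_some_eq_leaf_iff (u : PT X ⊤) (l : List (OT X ⊤)) (x : X) :
    graftB (some u :: l) = some (.leaf x) ↔ u = .leaf x ∧ graftB l = none := by
  rw [graftB_eq_leaf_iff, List.reduceOption_cons_of_some, graftB_eq_none_iff]
  simp [eq_comm (a := u)]

lemma List.reduceOption_map_some'' {α : Type} (l : List α) :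
    (l.map some).reduceOption = l := by
  induction l with
  | nil => rfl
  | cons a r ih => simpa using ih

lemma graftB_map_some (l : List (PT X ⊤)) (h2 : 2 ≤ l.length) :
    graftB (l.map some) = some (.node l.length h2 le_top l.get) := by
  match l, h2 with
  | a :: b :: r, _ =>
    rw [graftB_eq]
    have : (List.map some (a :: b :: r)).reduceOption = a :: b :: r :=
      List.reduceOption_map_some'' _
    rw [this, graftAux_cons_cons]

lemma leafListO_graftB (l : List (OT X ⊤)) :
    leafListO (graftB l) = (l.map leafListO).flatten := by
  have key : (l.map leafListO).flatten = (l.reduceOption.map PT.leafList).flatten := by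
    induction l with
    | nil => rfl
    | cons a r ih =>
      cases a with
      | none => simpa using ih
      | some t => simp [ih]
  rw [key, graftB_eq]
  match h : l.reduceOption with
  | [] => simp [graftAux]
  | [t] => simp [graftAux]
  | a :: b :: r =>
    rw [graftAux_cons_cons]
    show PT.leafList _ = _
    rw [PT.leafList]
    congr 1
    have : (List.finRange (a :: b :: r).length).map (fun i => ((a :: b :: r).get i).leafList)
        = ((List.finRange (a :: b :: r).length).map (a :: b :: r).get).map PT.leafList := by
      rw [List.map_map]; rfl
    rw [this, List.map_get_finRange]

lemma PT.length_leafList {N : ℕ∞} : ∀ t : PT X N, t.leafList.length = t.nLeaves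
  | .leaf _ => rfl
  | .node k h2 hN f => by
    rw [PT.leafList, PT.nLeaves, List.length_flatten, List.map_map, Fin.sum_univ_def]
    congr 1
    apply List.map_congr_left
    intro i _
    exact PT.length_leafList (f i)

lemma PT.one_le_nLeaves {N : ℕ∞} : ∀ t : PT X N, 1 ≤ t.nLeaves
  | .leaf _ => le_refl _
  | .node k h2 hN f => by
    rw [PT.nLeaves]
    calc 1 ≤ (f ⟨0, by omega⟩).nLeaves := PT.one_le_nLeaves _
    _ ≤ _ := Finset.single_le_sum (f := fun i => (f i).nLeaves) (fun i _ => Nat.zero_le _)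
          (Finset.mem_univ _)

end Top

section Sums
variable {K : Type} [Field K] [CharZero K]

lemma mapDomain_apply'' {α β : Type} (f : α → β) (v : α →₀ K) (x : β) :
    (Finsupp.mapDomain f v) x = v.sum fun a c => if f a = x then c else 0 := by
  rw [Finsupp.mapDomain, Finsupp.sum_apply]
  exact Finsupp.sum_congr fun a _ => Finsupp.single_apply

lemma tup_map_single {α : Type} (l : List α) :
    tup (l.map fun a => Finsupp.single a (1 : K)) = Finsupp.single l 1 := by
  induction l with
  | nil => rfl
  | cons a r ih =>
    show (Finsupp.single a (1:K)).sum
        (fun s c => c • (tup (r.map fun a => Finsupp.single a (1:K))).mapDomain (List.cons s))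
      = _
    rw [Finsupp.sum_single_index (by simp), ih, one_smul, Finsupp.mapDomain_single]

lemma card_filter_range_add (m n : ℕ) (P : ℕ → Prop) [DecidablePred P] :
    ((Finset.range (m+n)).filter P).card
      = ((Finset.range m).filter P).card + ((Finset.range n).filter (fun i => P (m+i))).card := by
  rw [Finset.range_add, Finset.filter_union, Finset.card_union_of_disjoint, Finset.filter_map,
    Finset.card_map]
  · rfl
  · refine Finset.disjoint_filter_filter ?_
    simp only [Finset.disjoint_left, Finset.mem_range, Finset.mem_map]
    rintro x hx ⟨y, hy, rfl⟩
    simp at hx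

/-- Key extraction: summing a function supported on pairs with first component a fixed
leaf, against a finsupp whose such coefficients count fibers of `d` on `A`. -/
lemma sum_extract {β : Type} {F : (OT ℕ ⊤ × OT ℕ ⊤) →₀ K} {A : Finset β} {d : β → OT ℕ ⊤}
    {u : PT ℕ ⊤}
    (hcnt : ∀ w, F (some u, w) = ((A.filter (fun i => d i = w)).card : K))
    (χ : OT ℕ ⊤ → K) :
    (∑ s ∈ F.support, F s * (if s.1 = some u then χ s.2 else 0)) = ∑ i ∈ A, χ (d i) := by
  have h1 : (∑ s ∈ F.support, F s * (if s.1 = some u then χ s.2 else 0))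
      = ∑ s ∈ F.support.filter (fun s => s.1 = some u), F s * χ s.2 := by
    rw [Finset.sum_filter]
    refine Finset.sum_congr rfl fun s _ => ?_
    by_cases h : s.1 = some u <;> simp [h]
  set W' := (F.support.filter (fun s => s.1 = some u)).image Prod.snd with hW'
  have h2 : ∑ s ∈ F.support.filter (fun s => s.1 = some u), F s * χ s.2
      = ∑ w ∈ W', F (some u, w) * χ w := by
    rw [hW', Finset.sum_image ?_]
    · refine Finset.sum_congr rfl fun s hs => ?_
      rw [Finset.mem_filter] at hs
      have : s = (some u, s.2) := Prod.ext hs.2 rfl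
      rw [← this]
    · intro s hs t ht hst
      rw [Finset.mem_coe, Finset.mem_filter] at hs ht
      exact Prod.ext (hs.2.trans ht.2.symm) hst
  have h3 : ∑ i ∈ A, χ (d i) = ∑ w ∈ A.image d, ((A.filter (fun i => d i = w)).card : K) * χ w := by
    rw [Finset.sum_comp χ d]
    refine Finset.sum_congr rfl fun w _ => ?_
    rw [nsmul_eq_mul]
  rw [h1, h2, h3]
  set U := W' ∪ A.image d with hU
  rw [Finset.sum_subset (Finset.subset_union_left (s₂ := A.image d)) ?van1,
      show (∑ w ∈ A.image d, ((A.filter (fun i => d i = w)).card : K) * χ w)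
        = ∑ w ∈ U, ((A.filter (fun i => d i = w)).card : K) * χ w from
      Finset.sum_subset (Finset.subset_union_right) ?van2]
  · exact Finset.sum_congr rfl fun w _ => by rw [hcnt w]
  case van1 =>
    intro w _ hw
    have : F (some u, w) = 0 := by
      by_contra hne
      exact hw (Finset.mem_image.mpr ⟨(some u, w),
        Finset.mem_filter.mpr ⟨Finsupp.mem_support_iff.mpr hne, rfl⟩, rfl⟩)
    rw [this, zero_mul]
  case van2 =>
    intro w _ hw
    have : A.filter (fun i => d i = w) = ∅ := by
      rw [Finset.filter_eq_empty_iff]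
      intro i hi hdi
      exact hw (Finset.mem_image.mpr ⟨i, hi, hdi⟩)
    rw [this]; simp

end Sums

set_option linter.unusedSectionVars false

/-- Deletion of the `i`-th leaf in a list of trees, each equipped with its own
single-leaf-deletion function. -/
def delL : List (PT ℕ ⊤ × (ℕ → OT ℕ ⊤)) → ℕ → List (OT ℕ ⊤)
  | [], _ => []
  | (t, d) :: r, i =>
    if i < t.nLeaves then d i :: r.map (fun p => some p.1)
    else some t :: delL r (i - t.nLeaves)

def sumL (dl : List (PT ℕ ⊤ × (ℕ → OT ℕ ⊤))) : ℕ := (dl.map (fun p => p.1.nLeaves)).sum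

def flatLab (dl : List (PT ℕ ⊤ × (ℕ → OT ℕ ⊤))) : List ℕ :=
  (dl.map (fun p => p.1.leafList)).flatten

@[simp] lemma sumL_nil : sumL [] = 0 := rfl
@[simp] lemma sumL_cons (t d r) : sumL ((t, d) :: r) = t.nLeaves + sumL r := by
  simp [sumL]
@[simp] lemma flatLab_nil : flatLab [] = [] := rfl
@[simp] lemma flatLab_cons (t d r) : flatLab ((t, d) :: r) = t.leafList ++ flatLab r := by
  simp [flatLab]

lemma delL_leafList : ∀ dl : List (PT ℕ ⊤ × (ℕ → OT ℕ ⊤)),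
    (∀ p ∈ dl, ∀ i < p.1.nLeaves, leafListO (p.2 i) = p.1.leafList.eraseIdx i) →
    ∀ i < sumL dl, leafListO (graftB (delL dl i)) = (flatLab dl).eraseIdx i
  | [], _, i, hi => by simp at hi
  | (t, d) :: r, hp, i, hi => by
    have hlen : t.leafList.length = t.nLeaves := PT.length_leafList t
    by_cases h : i < t.nLeaves
    · rw [delL, if_pos h, leafListO_graftB]
      simp only [List.map_cons, List.map_map, List.flatten_cons]
      have h1 : leafListO (d i) = t.leafList.eraseIdx i := hp (t, d) (by simp) i h
      have h2 : (r.map (leafListO ∘ fun p => some p.1)).flatten = flatLab r := by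
        simp [flatLab, Function.comp_def]
      rw [h1, h2, flatLab_cons, List.eraseIdx_append_of_lt_length (by omega)]
    · rw [delL, if_neg h, leafListO_graftB]
      simp only [List.map_cons, List.flatten_cons]
      have h2 : (List.map leafListO (delL r (i - t.nLeaves))).flatten
          = leafListO (graftB (delL r (i - t.nLeaves))) := (leafListO_graftB _).symm
      have h3 : leafListO (graftB (delL r (i - t.nLeaves)))
          = (flatLab r).eraseIdx (i - t.nLeaves) := by
        refine delL_leafList r (fun p hq => hp p (by simp [hq])) _ ?_
        rw [sumL_cons] at hi; omega
      rw [h2, h3, flatLab_cons, leafListO_some]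
      have h4 : i = t.leafList.length + (i - t.nLeaves) := by omega
      rw [h4, List.eraseIdx_append_of_length_le (by omega)]
      congr 2
      omega

section Main
variable {K : Type} [Field K] [CharZero K]

lemma mapDomain_tup_cons {α β : Type} (Dt : α →₀ K) (Ds : List (α →₀ K))
    (Fv : List α → β) (x : β) :
    (Finsupp.mapDomain Fv (tup (Dt :: Ds))) x
      = ∑ s ∈ Dt.support, Dt s *
          (Finsupp.mapDomain (fun l => Fv (s :: l)) (tup Ds)) x := by
  show (Finsupp.mapDomain Fv (Dt.sum fun s c => c • (tup Ds).mapDomain (List.cons s))) x = _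
  rw [show Finsupp.mapDomain Fv = ⇑(Finsupp.mapDomain.addMonoidHom Fv) from rfl,
    map_finsuppSum, Finsupp.sum_apply, Finsupp.sum]
  refine Finset.sum_congr rfl fun s _ => ?_
  rw [show ⇑(Finsupp.mapDomain.addMonoidHom Fv) = Finsupp.mapDomain Fv from rfl,
    Finsupp.mapDomain_smul, ← Finsupp.mapDomain_comp, Finsupp.smul_apply, smul_eq_mul]
  rfl

def GoodP (D : PT ℕ ⊤ → ((OT ℕ ⊤ × OT ℕ ⊤) →₀ K)) (t : PT ℕ ⊤) (d : ℕ → OT ℕ ⊤) : Prop :=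
  (∀ q, D t (none, q) = if some t = q then 1 else 0) ∧
  (∀ (a : ℕ) (q : OT ℕ ⊤), D t (some (.leaf a), q) =
    (((Finset.range t.nLeaves).filter
        (fun i => t.leafList.getD i 0 = a ∧ d i = q)).card : K))

lemma list_lemma (D : PT ℕ ⊤ → ((OT ℕ ⊤ × OT ℕ ⊤) →₀ K)) :
    ∀ (dl : List (PT ℕ ⊤ × (ℕ → OT ℕ ⊤))), (∀ td ∈ dl, GoodP D td.1 td.2) →
    ∀ (v : List (OT ℕ ⊤)),
    (∀ p, ((tup (dl.map (fun x => D x.1))).mapDomain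
        (fun l => (graftB (l.map Prod.fst), graftB (v ++ l.map Prod.snd)))) (none, p)
      = if graftB (v ++ dl.map (fun x => some x.1)) = p then 1 else 0) ∧
    (∀ (a : ℕ) (p : OT ℕ ⊤), ((tup (dl.map (fun x => D x.1))).mapDomain
        (fun l => (graftB (l.map Prod.fst), graftB (v ++ l.map Prod.snd)))) (some (.leaf a), p)
      = (((Finset.range (sumL dl)).filter
          (fun i => (flatLab dl).getD i 0 = a ∧ graftB (v ++ delL dl i) = p)).card : K)) := by
  intro dl
  induction dl with
  | nil =>
    intro _ v
    constructor
    · intro p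
      show (Finsupp.mapDomain _ (Finsupp.single [] 1)) _ = _
      rw [Finsupp.mapDomain_single, Finsupp.single_apply]
      simp [Prod.ext_iff, graftB_eq, List.reduceOption_nil, graftAux]
    · intro a p
      show (Finsupp.mapDomain _ (Finsupp.single [] 1)) _ = _
      rw [Finsupp.mapDomain_single, Finsupp.single_apply]
      simp [Prod.ext_iff, graftB_eq, List.reduceOption_nil, graftAux]
  | cons td r ih =>
    obtain ⟨t, d⟩ := td
    intro hdl v
    have hdl1 : ∀ q, D t (none, q) = if some t = q then 1 else 0 :=
      (hdl (t, d) List.mem_cons_self).1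
    have hdl2 : ∀ (a : ℕ) (q : OT ℕ ⊤), D t (some (.leaf a), q) =
        (((Finset.range t.nLeaves).filter
          (fun i => t.leafList.getD i 0 = a ∧ d i = q)).card : K) :=
      (hdl (t, d) List.mem_cons_self).2
    have hdlr : ∀ td ∈ r, GoodP D td.1 td.2 := fun td h => hdl td (List.mem_cons_of_mem _ h)
    have hcons : ∀ (s2 : OT ℕ ⊤),
        (fun (l : List (OT ℕ ⊤ × OT ℕ ⊤)) =>
            (graftB ((((none : OT ℕ ⊤), s2) :: l).map Prod.fst),
             graftB (v ++ (((none : OT ℕ ⊤), s2) :: l).map Prod.snd)))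
        = fun l => (graftB (l.map Prod.fst), graftB ((v ++ [s2]) ++ l.map Prod.snd)) := by
      intro s2
      funext l
      simp [List.append_assoc]
    constructor
    · -- A statement
      intro p
      rw [List.map_cons, mapDomain_tup_cons]
      have hv : ∀ s : OT ℕ ⊤ × OT ℕ ⊤,
          (Finsupp.mapDomain
            (fun l => (graftB ((s :: l).map Prod.fst), graftB (v ++ (s :: l).map Prod.snd)))
            (tup (r.map fun x => D x.1))) ((none : OT ℕ ⊤), p)
          = if s.1 = none then
              (if graftB ((v ++ [s.2]) ++ r.map (fun x => some x.1)) = p then 1 else 0)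
            else 0 := by
        rintro ⟨s1, s2⟩
        cases s1 with
        | none =>
          rw [if_pos rfl]
          rw [show ((((none : OT ℕ ⊤), s2) : OT ℕ ⊤ × OT ℕ ⊤).2) = s2 from rfl]
          rw [hcons s2]
          exact (ih hdlr (v ++ [s2])).1 p
        | some u =>
          rw [if_neg (by simp)]
          rw [mapDomain_apply'']
          refine (Finsupp.sum_congr (g2 := fun _ _ => 0) fun l _ => ?_).trans (by simp [Finsupp.sum])
          rw [if_neg]
          intro h
          exact graftB_cons_some_ne_none u _ ((Prod.ext_iff.mp h).1)
      rw [Finset.sum_congr rfl fun s _ => by rw [hv s]]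
      have hmain := Finset.sum_eq_single (s := (D t).support)
        (f := fun s : OT ℕ ⊤ × OT ℕ ⊤ => D t s * (if s.1 = none then
          (if graftB ((v ++ [s.2]) ++ r.map (fun x => some x.1)) = p then 1 else 0) else 0))
        ((none : OT ℕ ⊤), (some t : OT ℕ ⊤)) ?h0 ?h1
      case h0 =>
        rintro ⟨s1, s2⟩ hs hne
        cases s1 with
        | some u => simp
        | none =>
          have hz : D t (none, s2) = 0 := by
            rw [hdl1 s2, if_neg]
            intro h
            exact hne (by rw [← h])
          simp [hz]
      case h1 =>
        intro habs
        exact absurd (Finsupp.notMem_support_iff.mp habs) (by rw [hdl1]; simp)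
      rw [hmain]
      beta_reduce
      rw [hdl1, if_pos rfl, one_mul]
      simp [List.append_assoc]
    · -- B statement
      intro a p
      rw [List.map_cons, mapDomain_tup_cons]
      have hv : ∀ s : OT ℕ ⊤ × OT ℕ ⊤,
          (Finsupp.mapDomain
            (fun l => (graftB ((s :: l).map Prod.fst), graftB (v ++ (s :: l).map Prod.snd)))
            (tup (r.map fun x => D x.1))) ((some (PT.leaf a) : OT ℕ ⊤), p)
          = (if s.1 = none then
              (((Finset.range (sumL r)).filter (fun j => (flatLab r).getD j 0 = a ∧
                  graftB ((v ++ [s.2]) ++ delL r j) = p)).card : K)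
            else 0)
          + (if s.1 = some (PT.leaf a) then
              (if graftB ((v ++ [s.2]) ++ r.map (fun x => some x.1)) = p then (1:K) else 0)
            else 0) := by
        rintro ⟨s1, s2⟩
        cases s1 with
        | none =>
          rw [if_pos rfl, if_neg (by simp), add_zero]
          rw [show ((((none : OT ℕ ⊤), s2) : OT ℕ ⊤ × OT ℕ ⊤).2) = s2 from rfl, hcons s2]
          exact (ih hdlr (v ++ [s2])).2 a p
        | some u =>
          rw [if_neg (by simp), zero_add]
          by_cases hu : u = PT.leaf a
          · subst hu
            rw [if_pos rfl]
            have hA := (ih hdlr (v ++ [s2])).1 p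
            rw [← hA, mapDomain_apply'', mapDomain_apply'']
            refine Finsupp.sum_congr fun l _ => ?_
            have hiff : ((graftB (List.map Prod.fst ((some (PT.leaf a), s2) :: l)),
                  graftB (v ++ List.map Prod.snd ((some (PT.leaf a), s2) :: l)))
                    = ((some (PT.leaf a) : OT ℕ ⊤), p))
                ↔ ((graftB (List.map Prod.fst l), graftB (v ++ [s2] ++ List.map Prod.snd l))
                    = ((none : OT ℕ ⊤), p)) := by
              rw [Prod.ext_iff, Prod.ext_iff]
              constructor
              · rintro ⟨h1, h2⟩
                rcases (graftB_cons_some_eq_leaf_iff _ _ _).mp h1 with ⟨-, hn⟩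
                refine ⟨hn, ?_⟩
                rw [← h2]; simp [List.append_assoc]
              · rintro ⟨h1, h2⟩
                refine ⟨(graftB_cons_some_eq_leaf_iff _ _ _).mpr ⟨rfl, h1⟩, ?_⟩
                rw [← h2]; simp [List.append_assoc]
            by_cases hc : ((graftB (List.map Prod.fst l), graftB (v ++ [s2] ++ List.map Prod.snd l))
                    = ((none : OT ℕ ⊤), p))
            · rw [if_pos hc, if_pos (hiff.mpr hc)]
            · rw [if_neg hc, if_neg (fun h => hc (hiff.mp h))]
          · rw [if_neg (by simpa using hu)]
            rw [mapDomain_apply'']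
            refine (Finsupp.sum_congr (g2 := fun _ _ => 0) fun l _ => ?_).trans (by simp [Finsupp.sum])
            rw [if_neg]
            intro h
            have h1 := (Prod.ext_iff.mp h).1
            exact hu ((graftB_cons_some_eq_leaf_iff _ _ _).mp h1).1
      rw [Finset.sum_congr rfl fun s _ => by rw [hv s]]
      rw [Finset.sum_congr rfl (fun s _ => mul_add (D t s) _ _), Finset.sum_add_distrib]
      have h1 := Finset.sum_eq_single (s := (D t).support)
        (f := fun s : OT ℕ ⊤ × OT ℕ ⊤ => D t s * (if s.1 = none then
          (((Finset.range (sumL r)).filter (fun j => (flatLab r).getD j 0 = a ∧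
              graftB ((v ++ [s.2]) ++ delL r j) = p)).card : K) else 0))
        ((none : OT ℕ ⊤), (some t : OT ℕ ⊤)) ?h10 ?h11
      case h10 =>
        rintro ⟨s1, s2⟩ hs hne
        cases s1 with
        | some u => simp
        | none =>
          have hz : D t (none, s2) = 0 := by
            rw [hdl1 s2, if_neg]; intro h; exact hne (by rw [← h])
          simp [hz]
      case h11 =>
        intro habs
        exact absurd (Finsupp.notMem_support_iff.mp habs) (by rw [hdl1]; simp)
      rw [h1]
      have hcnt : ∀ w, D t (some (PT.leaf a), w)
          = ((((Finset.range t.nLeaves).filter (fun i => t.leafList.getD i 0 = a)).filter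
              (fun i => d i = w)).card : K) := by
        intro w
        rw [hdl2 a w, Finset.filter_filter]
      have h2 := sum_extract (F := D t) (A := (Finset.range t.nLeaves).filter
          (fun i => t.leafList.getD i 0 = a)) (d := d) (u := PT.leaf a) hcnt
          (fun w => if graftB ((v ++ [w]) ++ r.map (fun x => some x.1)) = p then (1:K) else 0)
      rw [h2]
      beta_reduce
      rw [hdl1, if_pos rfl, one_mul, if_pos rfl]
      -- now both summands explicit; compare with RHS
      have hlen : t.leafList.length = t.nLeaves := PT.length_leafList t
      have hhead : (∑ i ∈ (Finset.range t.nLeaves).filter (fun i => t.leafList.getD i 0 = a),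
            if graftB ((v ++ [d i]) ++ r.map (fun x => some x.1)) = p then (1:K) else 0)
          = (((Finset.range t.nLeaves).filter (fun i => (flatLab ((t,d) :: r)).getD i 0 = a ∧
              graftB (v ++ delL ((t,d) :: r) i) = p)).card : K) := by
        rw [Finset.sum_boole, Finset.filter_filter]
        congr 2
        refine Finset.filter_congr fun i hi => ?_
        rw [Finset.mem_range] at hi
        rw [flatLab_cons, List.getD_append _ _ _ _ (by omega), delL, if_pos hi]
        constructor
        · rintro ⟨hl, hg⟩
          exact ⟨hl, by rw [← hg]; simp [List.append_assoc]⟩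
        · rintro ⟨hl, hg⟩
          exact ⟨hl, by rw [← hg]; simp [List.append_assoc]⟩
      have htail : (((Finset.range (sumL r)).filter (fun j => (flatLab r).getD j 0 = a ∧
            graftB ((v ++ [some t]) ++ delL r j) = p)).card : K)
          = (((Finset.range (sumL r)).filter (fun j => (flatLab ((t,d) :: r)).getD (t.nLeaves + j) 0 = a ∧
              graftB (v ++ delL ((t,d) :: r) (t.nLeaves + j)) = p)).card : K) := by
        congr 2
        refine Finset.filter_congr fun j hj => ?_
        rw [flatLab_cons, List.getD_append_right _ _ _ _ (by omega), delL,
          if_neg (by omega)]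
        have hj' : t.nLeaves + j - t.leafList.length = j := by omega
        have hj'' : t.nLeaves + j - t.nLeaves = j := by omega
        rw [hj', hj'']
        constructor
        · rintro ⟨hl, hg⟩
          exact ⟨hl, by rw [← hg]; simp [List.append_assoc]⟩
        · rintro ⟨hl, hg⟩
          exact ⟨hl, by rw [← hg]; simp [List.append_assoc]⟩
      rw [hhead, htail, sumL_cons, card_filter_range_add, Nat.cast_add, add_comm]

lemma tree_good (Δ : FA K ℕ ⊤ →ₗ[K] ((OT ℕ ⊤ × OT ℕ ⊤) →₀ K))
    (hΔx : ∀ x : ℕ, Δ (Finsupp.single (some (PT.leaf x)) 1) =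
      Finsupp.single ((some (PT.leaf x) : OT ℕ ⊤), (none : OT ℕ ⊤)) 1 +
        Finsupp.single ((none : OT ℕ ⊤), (some (PT.leaf x) : OT ℕ ⊤)) 1)
    (hΔm : ∀ l : List (FA K ℕ ⊤), 2 ≤ l.length → Δ (G l) = G2 (l.map (Δ ·))) :
    ∀ T : PT ℕ ⊤, ∃ d : ℕ → OT ℕ ⊤,
      (∀ i < T.nLeaves, leafListO (d i) = T.leafList.eraseIdx i) ∧
      GoodP (fun t => Δ (Finsupp.single (some t) 1)) T d := by
  intro T
  induction T with
  | leaf x =>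
    refine ⟨fun _ => none, ?_, ?_, ?_⟩
    · intro i hi
      have hi0 : i = 0 := Nat.lt_one_iff.mp hi
      subst hi0
      rfl
    · intro q
      show Δ (Finsupp.single (some (PT.leaf x)) 1) (none, q) = _
      rw [hΔx x, Finsupp.add_apply, Finsupp.single_apply, Finsupp.single_apply]
      by_cases hq : (some (PT.leaf x) : OT ℕ ⊤) = q
      · rw [if_pos hq, if_neg (by simp [Prod.ext_iff]), if_pos (by rw [hq]), zero_add]
      · rw [if_neg hq, if_neg (by simp [Prod.ext_iff]),
          if_neg (fun h => hq (Prod.ext_iff.mp h).2), add_zero]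
    · intro a q
      show Δ (Finsupp.single (some (PT.leaf x)) 1) (some (PT.leaf a), q)
        = (((Finset.range (PT.leaf x : PT ℕ ⊤).nLeaves).filter
          (fun i => (PT.leaf x : PT ℕ ⊤).leafList.getD i 0 = a ∧ (none : OT ℕ ⊤) = q)).card : K)
      have hz : (Finsupp.single ((none : OT ℕ ⊤), (some (PT.leaf x) : OT ℕ ⊤)) (1:K))
          ((some (PT.leaf a) : OT ℕ ⊤), q) = 0 := by
        simp [Finsupp.single_apply, Prod.ext_iff]
      rw [hΔx x, Finsupp.add_apply, hz, add_zero, Finsupp.single_apply]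
      have h1 : (PT.leaf x : PT ℕ ⊤).nLeaves = 1 := rfl
      have h2 : (PT.leaf x : PT ℕ ⊤).leafList = [x] := rfl
      rw [h1, h2, Finset.range_one, Finset.filter_singleton]
      by_cases hc : ([x].getD 0 0 = a ∧ (none : OT ℕ ⊤) = q)
      · rw [if_pos hc]
        obtain ⟨hxa, hq⟩ := hc
        have hxa' : x = a := by simpa using hxa
        rw [if_pos (by rw [hxa', ← hq]), Finset.card_singleton, Nat.cast_one]
      · rw [if_neg hc, Finset.card_empty, Nat.cast_zero, if_neg]
        intro h
        obtain ⟨hh1, hh2⟩ := Prod.ext_iff.mp h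
        have hxa : x = a := by simpa using hh1
        exact hc ⟨hxa, hh2⟩
  | node k h2 hN f ih =>
    choose d hd using ih
    set dl := (List.finRange k).map (fun i => (f i, d i)) with hdldef
    have hgood : ∀ td ∈ dl, GoodP (fun t => Δ (Finsupp.single (some t) 1)) td.1 td.2 := by
      intro td htd
      rw [hdldef, List.mem_map] at htd
      obtain ⟨i, -, rfl⟩ := htd
      exact (hd i).2
    have hlen : ((List.finRange k).map f).length = k := by simp
    have hgraft : graftB (dl.map (fun x => some x.1)) = some (PT.node k h2 hN f) := by
      have hmm : dl.map (fun x => (some x.1 : OT ℕ ⊤)) = ((List.finRange k).map f).map some := by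
        rw [hdldef, List.map_map, List.map_map]
        rfl
      rw [hmm, graftB_map_some _ (by omega)]
      congr 1
      refine PT.node_ext hlen _ _ _ _ _ _ fun i => ?_
      simp [List.get_eq_getElem]
    have hsum : sumL dl = (PT.node k h2 hN f).nLeaves := by
      show sumL dl = ∑ i : Fin k, (f i).nLeaves
      rw [sumL, hdldef, List.map_map, Fin.sum_univ_def]
      rfl
    have hflat : flatLab dl = (PT.node k h2 hN f).leafList := by
      show flatLab dl = ((List.finRange k).map fun i => (f i).leafList).flatten
      rw [flatLab, hdldef, List.map_map]
      rfl
    have hkey : Δ (Finsupp.single (some (PT.node k h2 hN f)) 1)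
        = (tup (dl.map (fun x => Δ (Finsupp.single (some x.1) 1)))).mapDomain
          (fun l => (graftB (l.map Prod.fst), graftB ([] ++ l.map Prod.snd))) := by
      have hsingle : G ((List.finRange k).map fun i =>
            (Finsupp.single (some (f i) : OT ℕ ⊤) (1:K) : FA K ℕ ⊤))
          = Finsupp.single (some (PT.node k h2 hN f) : OT ℕ ⊤) (1:K) := by
        rw [G]
        have hmm : ((List.finRange k).map fun i =>
              (Finsupp.single (some (f i) : OT ℕ ⊤) (1:K) : FA K ℕ ⊤))
            = ((dl.map (fun x => (some x.1 : OT ℕ ⊤))).map fun a => Finsupp.single a (1:K)) := by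
          rw [hdldef, List.map_map, List.map_map]
          rfl
        rw [hmm, tup_map_single, Finsupp.mapDomain_single, hgraft]
      rw [← hsingle, hΔm _ (by simp; omega)]
      rw [G2]
      have hmm2 : ((List.finRange k).map fun i =>
            (Finsupp.single (some (f i) : OT ℕ ⊤) (1:K) : FA K ℕ ⊤)).map (Δ ·)
          = dl.map (fun x => Δ (Finsupp.single (some x.1) 1)) := by
        rw [hdldef, List.map_map, List.map_map]
        rfl
      rw [hmm2]
      rfl
    obtain ⟨hA, hB⟩ := list_lemma (fun t => Δ (Finsupp.single (some t) 1)) dl hgood []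
    refine ⟨fun i => graftB ([] ++ delL dl i), ?_, ?_, ?_⟩
    · intro i hi
      show leafListO (graftB (delL dl i)) = _
      rw [← hflat]
      refine delL_leafList dl ?_ i (by rw [hsum]; exact hi)
      intro td htd
      rw [hdldef, List.mem_map] at htd
      obtain ⟨j, -, rfl⟩ := htd
      exact (hd j).1
    · intro q
      show Δ (Finsupp.single (some (PT.node k h2 hN f)) 1) (none, q) = _
      rw [hkey, hA q, List.nil_append, hgraft]
    · intro a q
      show Δ (Finsupp.single (some (PT.node k h2 hN f)) 1) (some (PT.leaf a), q) = _
      rw [hkey, hB a q, hsum, hflat]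

lemma perm_cons_eraseIdx' (M : List ℕ) (i : ℕ) (h : i < M.length) :
    M.Perm (M[i] :: M.eraseIdx i) :=
  (List.perm_cons_erase (List.getElem_mem h)).trans (List.Perm.cons _ (List.erase_getElem h))

lemma count_perm (M L : List ℕ) (a : ℕ) (ha : a ∉ L) :
    (((Finset.range M.length).filter
        (fun i => M.getD i 0 = a ∧ (M.eraseIdx i).Perm L)).card)
      = if M.Perm (a :: L) then 1 else 0 := by
  by_cases hp : M.Perm (a :: L)
  · rw [if_pos hp, Finset.card_eq_one]
    have haM : a ∈ M := hp.mem_iff.mpr List.mem_cons_self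
    obtain ⟨i0, hi0, hget⟩ := List.getElem_of_mem haM
    refine ⟨i0, ?_⟩
    ext j
    simp only [Finset.mem_filter, Finset.mem_range, Finset.mem_singleton]
    constructor
    · rintro ⟨hj, hja, hjp⟩
      by_contra hne
      have hmem : a ∈ M.eraseIdx j := by
        rw [List.eraseIdx_eq_take_drop_succ, List.mem_append]
        rcases Nat.lt_or_ge i0 j with h | h
        · left
          rw [← hget]
          have h1 : i0 < (M.take j).length := by simp; omega
          have h2 : (M.take j)[i0]'(h1) = M[i0] := by rw [List.getElem_take]
          rw [← h2]
          exact List.getElem_mem h1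
        · have h' : j < i0 := by omega
          right
          rw [← hget]
          have h1 : i0 - (j+1) < (M.drop (j+1)).length := by simp; omega
          have h2 : (M.drop (j+1))[i0 - (j+1)] = M[i0] := by
            rw [List.getElem_drop]
            congr 1
            omega
          rw [← h2]
          exact List.getElem_mem h1
      exact ha (hjp.mem_iff.mp hmem)
    · rintro rfl
      refine ⟨hi0, by rw [List.getD_eq_getElem _ _ hi0, hget], ?_⟩
      have hperm := perm_cons_eraseIdx' M j hi0
      rw [hget] at hperm
      exact (hperm.symm.trans hp).cons_inv
  · rw [if_neg hp, Finset.card_eq_zero, Finset.filter_eq_empty_iff]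
    intro j hj
    rw [Finset.mem_range] at hj
    rintro ⟨hja, hjp⟩
    have hperm := perm_cons_eraseIdx' M j hj
    rw [List.getD_eq_getElem _ _ hj] at hja
    rw [hja] at hperm
    exact hp (hperm.trans (hjp.cons a))

lemma foldr_sh (Δ : FA K ℕ ⊤ →ₗ[K] ((OT ℕ ⊤ × OT ℕ ⊤) →₀ K))
    (hΔ1 : Δ (Finsupp.single (none : OT ℕ ⊤) 1) =
      Finsupp.single ((none : OT ℕ ⊤), (none : OT ℕ ⊤)) 1)
    (hΔx : ∀ x : ℕ, Δ (Finsupp.single (some (PT.leaf x)) 1) =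
      Finsupp.single ((some (PT.leaf x) : OT ℕ ⊤), (none : OT ℕ ⊤)) 1 +
        Finsupp.single ((none : OT ℕ ⊤), (some (PT.leaf x) : OT ℕ ⊤)) 1)
    (hΔm : ∀ l : List (FA K ℕ ⊤), 2 ≤ l.length → Δ (G l) = G2 (l.map (Δ ·)))
    (sh : FA K ℕ ⊤ → FA K ℕ ⊤ → FA K ℕ ⊤)
    (hsh : ∀ (f g : FA K ℕ ⊤) (t : OT ℕ ⊤),
      sh f g t = (Δ (Finsupp.single t 1)).sum fun p c => c * (f p.1 * g p.2)) :
    ∀ L : List ℕ, L.Nodup → ∀ t : OT ℕ ⊤,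
      ((L.map fun i => (Finsupp.single (some (PT.leaf i) : OT ℕ ⊤) 1 : FA K ℕ ⊤)).foldr sh
        (Finsupp.single (none : OT ℕ ⊤) 1)) t
      = if (leafListO t).Perm L then 1 else 0 := by
  intro L
  induction L with
  | nil =>
    intro _ t
    rw [List.map_nil, List.foldr_nil, Finsupp.single_apply]
    cases t with
    | none => simp
    | some T =>
      rw [if_neg (by simp), if_neg]
      intro hcontra
      have hlen := hcontra.length_eq
      have h1 := PT.length_leafList T
      have h2 := PT.one_le_nLeaves T
      simp only [leafListO_some, List.length_nil] at hlen
      omega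
  | cons a L ihL =>
    intro hnd t
    have hndL : L.Nodup := (List.nodup_cons.mp hnd).2
    have haL : a ∉ L := (List.nodup_cons.mp hnd).1
    rw [List.map_cons, List.foldr_cons, hsh]
    cases t with
    | none =>
      rw [hΔ1, Finsupp.sum_single_index (by simp)]
      rw [show (Finsupp.single (some (PT.leaf a) : OT ℕ ⊤) (1:K)) (none : OT ℕ ⊤) = 0 from
        by simp [Finsupp.single_apply]]
      rw [if_neg (by simp)]
      ring
    | some T =>
      obtain ⟨d, hdel, hgp⟩ := tree_good Δ hΔx hΔm T
      have hG2 : ∀ (b : ℕ) (q : OT ℕ ⊤), Δ (Finsupp.single (some T) 1) (some (.leaf b), q) =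
          (((Finset.range T.nLeaves).filter
            (fun i => T.leafList.getD i 0 = b ∧ d i = q)).card : K) := hgp.2
      rw [Finsupp.sum]
      have hpt : ∀ p ∈ (Δ (Finsupp.single (some T) 1)).support,
          Δ (Finsupp.single (some T) 1) p *
            ((Finsupp.single (some (PT.leaf a) : OT ℕ ⊤) (1:K)) p.1 *
              ((L.map fun i => (Finsupp.single (some (PT.leaf i) : OT ℕ ⊤) 1 : FA K ℕ ⊤)).foldr sh
                (Finsupp.single (none : OT ℕ ⊤) 1)) p.2)
          = Δ (Finsupp.single (some T) 1) p *
            (if p.1 = some (PT.leaf a) then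
              ((L.map fun i => (Finsupp.single (some (PT.leaf i) : OT ℕ ⊤) 1 : FA K ℕ ⊤)).foldr sh
                (Finsupp.single (none : OT ℕ ⊤) 1)) p.2
            else 0) := by
        intro p _
        congr 1
        rw [Finsupp.single_apply]
        by_cases h : p.1 = some (PT.leaf a)
        · rw [if_pos h, if_pos h.symm, one_mul]
        · rw [if_neg h, if_neg (fun hh => h hh.symm), zero_mul]
      rw [Finset.sum_congr rfl hpt]
      have hcnt : ∀ w, Δ (Finsupp.single (some T) 1) (some (PT.leaf a), w)
          = ((((Finset.range T.nLeaves).filter (fun i => T.leafList.getD i 0 = a)).filter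
              (fun i => d i = w)).card : K) := by
        intro w
        rw [hG2 a w, Finset.filter_filter]
      rw [sum_extract hcnt
        (fun w => ((L.map fun i => (Finsupp.single (some (PT.leaf i) : OT ℕ ⊤) 1 : FA K ℕ ⊤)).foldr sh
          (Finsupp.single (none : OT ℕ ⊤) 1)) w)]
      have hstep : ∀ i ∈ (Finset.range T.nLeaves).filter (fun i => T.leafList.getD i 0 = a),
          ((L.map fun i => (Finsupp.single (some (PT.leaf i) : OT ℕ ⊤) 1 : FA K ℕ ⊤)).foldr sh
            (Finsupp.single (none : OT ℕ ⊤) 1)) (d i)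
          = if ((T.leafList.eraseIdx i).Perm L) then (1:K) else 0 := by
        intro i hi
        rw [Finset.mem_filter, Finset.mem_range] at hi
        rw [ihL hndL (d i), hdel i hi.1]
      rw [Finset.sum_congr rfl hstep, Finset.sum_boole, Finset.filter_filter]
      have hrange : Finset.range T.nLeaves = Finset.range T.leafList.length := by
        rw [PT.length_leafList]
      rw [hrange, count_perm T.leafList L a haL]
      rw [leafListO_some]
      by_cases hper : T.leafList.Perm (a :: L)
      · rw [if_pos hper, if_pos hper, Nat.cast_one]
      · rw [if_neg hper, if_neg hper, Nat.cast_zero]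

end Main
end Aux
/-- In the shuffle algebra `(K{X}_ω, ⧢)` dual to the free
`Mag_ω`-Hopf algebra (`X = ℕ`, variables `x_i = i`), the product of `n` distinct
variables is `x_0 ⧢ x_1 ⧢ ⋯ ⧢ x_{n-1} = ∑_T ∑_{σ ∈ Σ_n} T^σ`, summing over unlabeled
planar reduced trees `T` with `n` leaves and all leaf-labelings by the `n` variables:
equivalently, the coefficient of a tree monomial `t` in this product is `1` if the
leaf list of `t` is a permutation of `(x_0, …, x_{n-1})` and `0` otherwise. -/
theorem stmt13 (K : Type) [Field K] [CharZero K]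
    (Δ : FA K ℕ ⊤ →ₗ[K] ((OT ℕ ⊤ × OT ℕ ⊤) →₀ K))
    (hΔ1 : Δ (Finsupp.single (none : OT ℕ ⊤) 1) =
      Finsupp.single ((none : OT ℕ ⊤), (none : OT ℕ ⊤)) 1)
    (hΔx : ∀ x : ℕ, Δ (Finsupp.single (some (PT.leaf x)) 1) =
      Finsupp.single ((some (PT.leaf x) : OT ℕ ⊤), (none : OT ℕ ⊤)) 1 +
        Finsupp.single ((none : OT ℕ ⊤), (some (PT.leaf x) : OT ℕ ⊤)) 1)
    (hΔm : ∀ l : List (FA K ℕ ⊤), 2 ≤ l.length → Δ (G l) = G2 (l.map (Δ ·)))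
    (sh : FA K ℕ ⊤ → FA K ℕ ⊤ → FA K ℕ ⊤)
    (hsh : ∀ (f g : FA K ℕ ⊤) (t : OT ℕ ⊤),
      sh f g t = (Δ (Finsupp.single t 1)).sum fun p c => c * (f p.1 * g p.2))
    (n : ℕ) (hn : 1 ≤ n) :
    (∀ t : PT ℕ ⊤,
      (((List.range n).map fun i =>
          (Finsupp.single (some (PT.leaf i) : OT ℕ ⊤) 1 : FA K ℕ ⊤)).foldr sh
        (Finsupp.single (none : OT ℕ ⊤) 1)) (some t) =
        if (PT.leafList t).Perm (List.range n) then 1 else 0) ∧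
    (((List.range n).map fun i =>
        (Finsupp.single (some (PT.leaf i) : OT ℕ ⊤) 1 : FA K ℕ ⊤)).foldr sh
      (Finsupp.single (none : OT ℕ ⊤) 1)) none = 0 := by
  have key := foldr_sh Δ hΔ1 hΔx hΔm sh hsh (List.range n) List.nodup_range
  constructor
  · intro t
    rw [key (some t), leafListO_some]
  · rw [key none, leafListO_none, if_neg]
    intro hcontra
    have := hcontra.length_eq
    simp at this
    omega


end
end

section
/- The map ∇₂ : (K{X}_N, ⧢) → (K{X}_N, ⧢) ⊗ (K{X}_N, ⧢) dual to the binary grafting operation ∨² is a morphism of commutative algebras, satisfies ∇₂(T) = T⊗1 + 1⊗T + T¹⊗T² if T = ∨²(T¹.T²) and ∇₂(T) = T⊗1 + 1⊗T if the root of T has arity ≠ 2, and is not coassociative; thus (K{X}_N, ⧢, ∇₂) is a co-magma object in unital commutative algebras. -/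
noncomputable section

/-- `f ⊗ g` as an element of the tensor square (on the basis of pairs). -/
def tens {K X : Type} {N : ℕ∞} [Semiring K] (f g : FA K X N) :
    (OT X N × OT X N) →₀ K :=
  f.sum fun s c => c • g.mapDomain (Prod.mk s)

/-- The canonical pairing on the tensor square. -/
def pair2 {K X : Type} {N : ℕ∞} [Semiring K] (u v : (OT X N × OT X N) →₀ K) : K :=
  u.sum fun p c => c * v p

/-- The shuffle product `⧢ ⊗ ⧢` on the tensor square, induced componentwise by a
shuffle product `sh` on `K{X}_N`. -/
def sh2 {K X : Type} {N : ℕ∞} [Semiring K] (sh : FA K X N → FA K X N → FA K X N)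
    (u v : (OT X N × OT X N) →₀ K) : (OT X N × OT X N) →₀ K :=
  u.sum fun p c => v.sum fun q d =>
    (c * d) • tens (sh (Finsupp.single p.1 1) (Finsupp.single q.1 1))
      (sh (Finsupp.single p.2 1) (Finsupp.single q.2 1))

/-- `∇₂ ⊗ id` on the tensor square. -/
def nablaTensorId {K X : Type} {N : ℕ∞} [Semiring K]
    (nab : FA K X N →ₗ[K] ((OT X N × OT X N) →₀ K))
    (u : (OT X N × OT X N) →₀ K) : (OT X N × OT X N × OT X N) →₀ K :=
  u.sum fun p c => c • (nab (Finsupp.single p.1 1)).mapDomain fun q => (q.1, q.2, p.2)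

/-- `id ⊗ ∇₂` on the tensor square. -/
def idTensorNabla {K X : Type} {N : ℕ∞} [Semiring K]
    (nab : FA K X N →ₗ[K] ((OT X N × OT X N) →₀ K))
    (u : (OT X N × OT X N) →₀ K) : (OT X N × OT X N × OT X N) →₀ K :=
  u.sum fun p c => c • (nab (Finsupp.single p.2 1)).mapDomain fun q => (p.1, q.1, q.2)

namespace S15
variable {K X : Type} {N : ℕ∞} [Field K]

lemma graftB_nn : graftB ([none, none] : List (OT X N)) = none := rfl
lemma graftB_sn (a : PT X N) : graftB [some a, none] = some a := rfl
lemma graftB_ns (a : PT X N) : graftB [none, some a] = some a := rfl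

lemma graftB_ss (hN2 : ((2:ℕ) : ℕ∞) ≤ N) (a b : PT X N) :
    graftB [some a, some b] = some (PT.node 2 (by norm_num) hN2 ([a,b]).get) := by
  show (if h : 2 ≤ ([a,b]:List (PT X N)).length ∧ ((([a,b]:List (PT X N)).length : ℕ)  : ℕ∞) ≤ N then
      some (PT.node ([a,b]:List (PT X N)).length h.1 h.2 ([a,b]:List (PT X N)).get) else none) = _
  rw [dif_pos (⟨by norm_num, by simpa using hN2⟩ : 2 ≤ ([a,b]:List (PT X N)).length ∧ ((([a,b]:List (PT X N)).length : ℕ)  : ℕ∞) ≤ N)]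
  rfl

-- node injectivity over Fin 2
example (h : 2 ≤ 2) (h' : ((2:ℕ):ℕ∞) ≤ N) (f g : Fin 2 → PT X N) :
    PT.node 2 h h' f = PT.node 2 h h' g ↔ f = g := by
  simp [PT.node.injEq]

end S15
namespace S15
variable {K X : Type} {N : ℕ∞} [Field K]

lemma mapDomain_fsum {α β γ : Type} (f : α → β) (s : γ →₀ K) (v : γ → K → α →₀ K) :
    Finsupp.mapDomain f (s.sum v) = s.sum fun a b => Finsupp.mapDomain f (v a b) :=
  map_finsuppSum (Finsupp.mapDomain.addMonoidHom f) s v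

lemma pairF_single (a : OT X N) (h : FA K X N) : pairF (Finsupp.single a 1) h = h a := by
  simp [pairF, Finsupp.sum_single_index]

lemma pair2_single (p : OT X N × OT X N) (w : (OT X N × OT X N) →₀ K) :
    pair2 (Finsupp.single p 1) w = w p := by
  simp [pair2, Finsupp.sum_single_index]

lemma tens_single (u v : OT X N) :
    tens (Finsupp.single u (1:K)) (Finsupp.single v 1) = Finsupp.single (u, v) 1 := by
  simp [tens, Finsupp.sum_single_index, Finsupp.mapDomain_single]

lemma tup_one {α : Type} (b : α →₀ K) : tup [b] = b.sum fun t d => Finsupp.single [t] d := by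
  unfold tup
  congr 1; funext t d
  show d • Finsupp.mapDomain (List.cons t) (Finsupp.single [] 1) = _
  rw [Finsupp.mapDomain_single]
  simp [Finsupp.smul_single]

lemma tup_pair {α : Type} (a b : α →₀ K) :
    tup [a, b] = a.sum fun s c => b.sum fun t d => Finsupp.single [s, t] (c * d) := by
  show (a.sum fun s c => c • (tup [b]).mapDomain (List.cons s)) = _
  rw [tup_one]
  congr 1; funext s c
  rw [mapDomain_fsum, Finsupp.smul_sum]
  congr 1; funext t d
  rw [Finsupp.mapDomain_single]
  simp [Finsupp.smul_single, mul_comm]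

lemma G_pair (u v : OT X N) :
    G (K := K) [Finsupp.single u 1, Finsupp.single v 1] = Finsupp.single (graftB [u, v]) 1 := by
  rw [G, tup_pair, Finsupp.sum_single_index, Finsupp.sum_single_index]
  · simp [Finsupp.mapDomain_single]
  · simp
  · simp [Finsupp.sum_single_index]

lemma fsum_pick {P : Type} [DecidableEq P] (w : P →₀ K) (p0 : P) :
    (w.sum fun p c => if p = p0 then c else 0) = w p0 := by
  classical
  rw [Finsupp.sum]
  rw [Finset.sum_ite_eq' w.support p0 (fun p => w p)]
  split
  · rfl
  · exact (Finsupp.notMem_support_iff.mp (by assumption)).symm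

end S15
namespace S15
variable {K X : Type} {N : ℕ∞} [Field K]

lemma fsum_pick' {P : Type} [DecidableEq P] (w : P →₀ K) (p0 : P) (r : P → K) :
    (w.sum fun p c => if p = p0 then c * r p else 0) = w p0 * r p0 := by
  rw [Finsupp.sum, Finset.sum_congr rfl (fun p _ => by
    rw [show (if p = p0 then w p * r p else 0) = if p = p0 then w p * r p0 else 0 by
      split <;> simp_all])]
  rw [Finset.sum_ite_eq' w.support p0 (fun p => w p * r p0)]
  split
  · rfl
  · rw [Finsupp.notMem_support_iff.mp (by assumption), zero_mul]

lemma mapDomain_mk_apply {P Q : Type} [DecidableEq P] (g : Q →₀ K) (s u : P) (v : Q) :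
    (g.mapDomain (Prod.mk s)) (u, v) = if s = u then g v else 0 := by
  split
  · next h => subst h; exact Finsupp.mapDomain_apply (fun a b hab => by simpa using hab) g v
  · next h => exact Finsupp.mapDomain_notin_range _ _ (by rintro ⟨q, hq⟩; exact h (congrArg Prod.fst hq))

lemma tens_apply (f g : FA K X N) (u v : OT X N) : tens f g (u, v) = f u * g v := by
  classical
  rw [tens, Finsupp.sum_apply]
  rw [Finsupp.sum_congr (g2 := fun s c => if s = u then c * g v else 0) (fun s _ => by
    rw [Finsupp.smul_apply, mapDomain_mk_apply, smul_eq_mul]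
    split <;> simp_all)]
  exact fsum_pick' f u (fun _ => g v)

lemma mapDomain_phiR_apply {P : Type} [DecidableEq P] (h : (P × P) →₀ K) (z : P) (a b c : P) :
    (h.mapDomain fun q : P × P => (q.1, q.2, z)) (a, b, c) = if z = c then h (a, b) else 0 := by
  split
  · next hz =>
      subst hz
      exact Finsupp.mapDomain_apply
        (fun q q' hq => by
          simp only [Prod.mk.injEq] at hq
          exact Prod.ext hq.1 hq.2.1) h (a, b)
  · next hz =>
      refine Finsupp.mapDomain_notin_range _ _ ?_
      rintro ⟨q, hq⟩
      exact hz (congrArg (fun x => x.2.2) hq)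

lemma mapDomain_phiL_apply {P : Type} [DecidableEq P] (h : (P × P) →₀ K) (z : P) (a b c : P) :
    (h.mapDomain fun q : P × P => (z, q.1, q.2)) (a, b, c) = if z = a then h (b, c) else 0 := by
  split
  · next hz =>
      subst hz
      exact Finsupp.mapDomain_apply
        (fun q q' hq => by
          simp only [Prod.mk.injEq] at hq
          exact Prod.ext hq.2.1 hq.2.2) h (b, c)
  · next hz =>
      refine Finsupp.mapDomain_notin_range _ _ ?_
      rintro ⟨q, hq⟩
      exact hz (congrArg (fun x => x.1) hq)

end S15
namespace S15
variable {K X : Type} {N : ℕ∞} [Field K]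

lemma G2_pair (m n : (OT X N × OT X N) →₀ K) :
    G2 (K := K) [m, n] = m.sum fun s c => n.sum fun t d => Finsupp.single (graftB2 [s, t]) (c * d) := by
  rw [G2, tup_pair, mapDomain_fsum]
  congr 1; funext s c
  rw [mapDomain_fsum]
  congr 1; funext t d
  rw [Finsupp.mapDomain_single]

lemma exchange {A : Type} (m n α β : (A × A) →₀ K) :
    (m.sum fun s c => n.sum fun t d => (c * d) * (α (s.1, t.1) * β (s.2, t.2)))
      = α.sum fun p c => β.sum fun q d => (c * d) * (m (p.1, q.1) * n (p.2, q.2)) := by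
  classical
  set F : (A × A) × (A × A) → K :=
    fun x => (m x.1 * n x.2) * (α (x.1.1, x.2.1) * β (x.1.2, x.2.2)) with hF
  set e : ((A × A) × (A × A)) → ((A × A) × (A × A)) :=
    fun y => ((y.1.1, y.2.1), (y.1.2, y.2.2)) with he'
  have he : ∀ x, e (e x) = x := fun x => rfl
  have einj : ∀ x ∈ α.support ×ˢ β.support, ∀ y ∈ α.support ×ˢ β.support, e x = e y → x = y :=
    fun x _ y _ h => by rw [← he x, h, he]
  have hL : (m.sum fun s c => n.sum fun t d => (c * d) * (α (s.1, t.1) * β (s.2, t.2)))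
      = ∑ x ∈ m.support ×ˢ n.support, F x := by
    rw [Finset.sum_product]; rfl
  have hR : (α.sum fun p c => β.sum fun q d => (c * d) * (m (p.1, q.1) * n (p.2, q.2)))
      = ∑ y ∈ α.support ×ˢ β.support, F (e y) := by
    rw [Finset.sum_product]
    refine Finset.sum_congr rfl fun p _ => Finset.sum_congr rfl fun q _ => ?_
    exact mul_comm _ _
  rw [hL, hR, ← Finset.sum_image einj]
  set S1 := m.support ×ˢ n.support
  set T := (α.support ×ˢ β.support).image e
  have h1 : ∀ x ∈ S1 ∪ T, x ∉ S1 → F x = 0 := by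
    intro x _ hx
    rw [Finset.mem_product] at hx
    rcases not_and_or.mp hx with h | h
    · have h0 : m x.1 = 0 := Finsupp.notMem_support_iff.mp h
      simp [hF, h0]
    · have h0 : n x.2 = 0 := Finsupp.notMem_support_iff.mp h
      simp [hF, h0]
  have h2 : ∀ x ∈ S1 ∪ T, x ∉ T → F x = 0 := by
    intro x _ hx
    have hex : e x ∉ α.support ×ˢ β.support := by
      intro hmem
      exact hx (by rw [← he x]; exact Finset.mem_image_of_mem e hmem)
    rw [Finset.mem_product] at hex
    rcases not_and_or.mp hex with h | h
    · have h0 : α (x.1.1, x.2.1) = 0 := Finsupp.notMem_support_iff.mp h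
      simp [hF, h0]
    · have h0 : β (x.1.2, x.2.2) = 0 := Finsupp.notMem_support_iff.mp h
      simp [hF, h0]
  rw [Finset.sum_subset Finset.subset_union_left h1,
    Finset.sum_subset Finset.subset_union_right h2]

end S15
namespace S15
variable {K X : Type} {N : ℕ∞} [Field K]

lemma sum_double_single {A B : Type} (m n : A →₀ K) (φ : A → A → B) (h : B → K → K)
    (h0 : ∀ b, h b 0 = 0) (h1 : ∀ b c₁ c₂, h b (c₁ + c₂) = h b c₁ + h b c₂) :
    ((m.sum fun s c => n.sum fun t d => Finsupp.single (φ s t) (c * d)).sum h)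
      = m.sum fun s c => n.sum fun t d => h (φ s t) (c * d) := by
  rw [Finsupp.sum_sum_index h0 h1]
  refine Finsupp.sum_congr fun s _ => ?_
  rw [Finsupp.sum_sum_index h0 h1]
  refine Finsupp.sum_congr fun t _ => ?_
  rw [Finsupp.sum_single_index (h0 _)]

lemma get_pair_inj {a b a' b' : PT X N} (h : (([a,b] : List (PT X N)).get : Fin 2 → PT X N) = [a',b'].get) :
    a = a' ∧ b = b' := ⟨congrFun h ⟨0, by norm_num⟩, congrFun h ⟨1, by norm_num⟩⟩

lemma eq_get_pair_iff (a b : PT X N) (f : Fin 2 → PT X N) :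
    f = ([a,b] : List (PT X N)).get ↔ f 0 = a ∧ f 1 = b := by
  constructor
  · rintro rfl; exact ⟨rfl, rfl⟩
  · rintro ⟨h1, h2⟩
    funext i
    match i with
    | ⟨0, _⟩ => exact h1
    | ⟨1, _⟩ => exact h2

end S15
namespace S15
variable {K X : Type} {N : ℕ∞} [Field K]

lemma assoc_ne (x : X) {N : ℕ∞} {q1 q2 q3 q4 : 2 ≤ 2} {r1 r2 r3 r4 : ((2:ℕ):ℕ∞) ≤ N} :
    PT.node 2 q1 r1 (([PT.node 2 q3 r3 (([PT.leaf x, PT.leaf x] : List (PT X N)).get),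
        PT.leaf x] : List (PT X N)).get) ≠
    PT.node 2 q2 r2 (([PT.leaf x, PT.node 2 q4 r4 (([PT.leaf x, PT.leaf x] : List (PT X N)).get)]
        : List (PT X N)).get) := by
  intro h
  simp only [PT.node.injEq, heq_eq_eq, true_and] at h
  obtain ⟨h1, -⟩ := get_pair_inj h
  cases h1

end S15

set_option maxHeartbeats 1000000

/-- For the free unitary `Mag_N`-algebra `K{X}_N` (`2 ≤ N ≤ ω`,
`X = {x_0, x_1, …}`) with dual shuffle product `⧢`, the map `∇₂` dual to the binary
grafting `∨²` (i.e. `⟨∨²(f₁.f₂), g⟩ = ⟨f₁ ⊗ f₂, ∇₂(g)⟩`) is a morphism of unital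
commutative algebras `(K{X}_N, ⧢) → (K{X}_N, ⧢)⊗(K{X}_N, ⧢)`; on tree monomials it is
given by `∇₂(T) = T⊗1 + 1⊗T + T¹⊗T²` if `T = ∨²(T¹.T²)` and `∇₂(T) = T⊗1 + 1⊗T` if
the root of `T` has arity `≠ 2`; and it is not coassociative. Thus `(K{X}_N, ⧢, ∇₂)`
is a co-magma object in unital commutative algebras. -/
theorem stmt15 (K : Type) [Field K] [CharZero K] (N : ℕ∞) (hN : 2 ≤ N)
    (Δ : FA K ℕ N →ₗ[K] ((OT ℕ N × OT ℕ N) →₀ K))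
    (hΔ1 : Δ (Finsupp.single (none : OT ℕ N) 1) =
      Finsupp.single ((none : OT ℕ N), (none : OT ℕ N)) 1)
    (hΔx : ∀ x : ℕ, Δ (Finsupp.single (some (PT.leaf x)) 1) =
      Finsupp.single ((some (PT.leaf x) : OT ℕ N), (none : OT ℕ N)) 1 +
        Finsupp.single ((none : OT ℕ N), (some (PT.leaf x) : OT ℕ N)) 1)
    (hΔm : ∀ l : List (FA K ℕ N), 2 ≤ l.length → (l.length : ℕ∞) ≤ N →
      Δ (G l) = G2 (l.map (Δ ·)))
    (sh : FA K ℕ N → FA K ℕ N → FA K ℕ N)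
    (hsh : ∀ (f g : FA K ℕ N) (t : OT ℕ N),
      sh f g t = (Δ (Finsupp.single t 1)).sum fun p c => c * (f p.1 * g p.2))
    (nab : FA K ℕ N →ₗ[K] ((OT ℕ N × OT ℕ N) →₀ K))
    (hnab : ∀ f₁ f₂ g : FA K ℕ N,
      pairF (G [f₁, f₂]) g = pair2 (tens f₁ f₂) (nab g)) :
    (nab (Finsupp.single (none : OT ℕ N) 1) =
      Finsupp.single ((none : OT ℕ N), (none : OT ℕ N)) 1) ∧
    (∀ f g : FA K ℕ N, nab (sh f g) = sh2 sh (nab f) (nab g)) ∧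
    (∀ (h : 2 ≤ 2) (h' : ((2 : ℕ) : ℕ∞) ≤ N) (f : Fin 2 → PT ℕ N),
      nab (Finsupp.single (some (PT.node 2 h h' f) : OT ℕ N) 1) =
        Finsupp.single ((some (PT.node 2 h h' f) : OT ℕ N), (none : OT ℕ N)) 1 +
          Finsupp.single ((none : OT ℕ N), (some (PT.node 2 h h' f) : OT ℕ N)) 1 +
            Finsupp.single ((some (f 0) : OT ℕ N), (some (f 1) : OT ℕ N)) 1) ∧
    (∀ x : ℕ, nab (Finsupp.single (some (PT.leaf x) : OT ℕ N) 1) =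
      Finsupp.single ((some (PT.leaf x) : OT ℕ N), (none : OT ℕ N)) 1 +
        Finsupp.single ((none : OT ℕ N), (some (PT.leaf x) : OT ℕ N)) 1) ∧
    (∀ (k : ℕ) (h : 2 ≤ k) (h' : (k : ℕ∞) ≤ N) (f : Fin k → PT ℕ N), k ≠ 2 →
      nab (Finsupp.single (some (PT.node k h h' f) : OT ℕ N) 1) =
        Finsupp.single ((some (PT.node k h h' f) : OT ℕ N), (none : OT ℕ N)) 1 +
          Finsupp.single ((none : OT ℕ N), (some (PT.node k h h' f) : OT ℕ N)) 1) ∧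
    ¬ (∀ f : FA K ℕ N, nablaTensorId nab (nab f) = idTensorNabla nab (nab f)) := by

  classical
  have hN2 : ((2 : ℕ) : ℕ∞) ≤ N := by exact_mod_cast hN
  -- nab is evaluation along binary grafting
  have key : ∀ (h : FA K ℕ N) (u v : OT ℕ N), nab h (u, v) = h (graftB [u, v]) := by
    intro h u v
    have h1 := hnab (Finsupp.single u 1) (Finsupp.single v 1) h
    rw [S15.G_pair, S15.pairF_single, S15.tens_single, S15.pair2_single] at h1
    exact h1.symm
  refine ⟨?_, ?_, ?_, ?_, ?_, ?_⟩
  · -- S1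
    ext p
    obtain ⟨u, v⟩ := p
    rw [key]
    rcases u with _ | a <;> rcases v with _ | b <;>
      simp [S15.graftB_nn, S15.graftB_sn, S15.graftB_ns, S15.graftB_ss hN2,
        Finsupp.single_apply, Prod.ext_iff]
  · -- S2 multiplicativity
    have sh_single : ∀ (a b u : OT ℕ N),
        sh (Finsupp.single a 1) (Finsupp.single b 1) u = Δ (Finsupp.single u 1) (a, b) := by
      intro a b u
      rw [hsh]
      rw [Finsupp.sum_congr (g2 := fun p c => if p = (a, b) then c else 0) (fun p _ => by
        rcases p with ⟨p1, p2⟩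
        rw [Finsupp.single_apply, Finsupp.single_apply]
        by_cases h1 : p1 = a
        · by_cases h2 : p2 = b
          · subst h1; subst h2; simp
          · subst h1; simp [h2, show ¬ b = p2 from fun h => h2 h.symm]
        · simp [h1, show ¬ a = p1 from fun h => h1 h.symm])]
      exact S15.fsum_pick _ _
    intro f g
    ext p
    obtain ⟨u, v⟩ := p
    rw [key, hsh]
    have hm := hΔm [Finsupp.single u 1, Finsupp.single v 1] (by norm_num) (by simpa using hN)
    rw [S15.G_pair] at hm
    simp only [List.map_cons, List.map_nil] at hm
    rw [hm, S15.G2_pair, S15.sum_double_single (Δ (Finsupp.single u 1)) (Δ (Finsupp.single v 1))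
      (fun s t => graftB2 [s, t]) (fun p c => c * (f p.1 * g p.2))
      (fun b => zero_mul _) (fun b c₁ c₂ => add_mul c₁ c₂ _)]
    have L1 : ((Δ (Finsupp.single u 1)).sum fun s c => (Δ (Finsupp.single v 1)).sum fun t d =>
          (c * d) * (f (graftB2 [s, t]).1 * g (graftB2 [s, t]).2))
        = (Δ (Finsupp.single u 1)).sum fun s c => (Δ (Finsupp.single v 1)).sum fun t d =>
          (c * d) * ((nab f) (s.1, t.1) * (nab g) (s.2, t.2)) := by
      refine Finsupp.sum_congr fun s _ => Finsupp.sum_congr fun t _ => ?_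
      rw [show graftB2 [s, t] = (graftB [s.1, t.1], graftB [s.2, t.2]) from rfl]
      rw [← key f, ← key g]
    rw [L1, S15.exchange]
    -- now compute the RHS
    rw [sh2, Finsupp.sum_apply]
    refine (Finsupp.sum_congr fun p _ => ?_).symm
    rw [Finsupp.sum_apply]
    refine Finsupp.sum_congr fun q _ => ?_
    rw [Finsupp.smul_apply, smul_eq_mul, S15.tens_apply, sh_single, sh_single]
  · -- S3 node of arity 2
    intro h h' f
    ext p
    obtain ⟨u, v⟩ := p
    rw [key]
    rcases u with _ | a <;> rcases v with _ | b <;>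
      simp [S15.graftB_nn, S15.graftB_sn, S15.graftB_ns, S15.graftB_ss hN2,
        Finsupp.single_apply, Finsupp.add_apply, Prod.ext_iff, PT.node.injEq,
        S15.eq_get_pair_iff, eq_comm, and_comm]
  · -- S4 leaves
    intro x
    ext p
    obtain ⟨u, v⟩ := p
    rw [key]
    rcases u with _ | a <;> rcases v with _ | b <;>
      simp [S15.graftB_nn, S15.graftB_sn, S15.graftB_ns, S15.graftB_ss hN2,
        Finsupp.single_apply, Finsupp.add_apply, Prod.ext_iff]
  · -- S5 node of arity ≠ 2
    intro k h h' f hk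
    ext p
    obtain ⟨u, v⟩ := p
    rw [key]
    rcases u with _ | a <;> rcases v with _ | b <;>
      simp [S15.graftB_nn, S15.graftB_sn, S15.graftB_ns, S15.graftB_ss hN2,
        Finsupp.single_apply, Finsupp.add_apply, Prod.ext_iff, PT.node.injEq, hk]
  · -- S6 non-coassociativity
    have ntid : ∀ (w : (OT ℕ N × OT ℕ N) →₀ K) (a b c : OT ℕ N),
        nablaTensorId nab w (a, b, c) = w (graftB [a, b], c) := by
      intro w a b c
      rw [nablaTensorId, Finsupp.sum_apply]
      rw [Finsupp.sum_congr (g2 := fun p cp => if p = (graftB [a, b], c) then cp else 0)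
        (fun p _ => by
          rw [Finsupp.smul_apply, S15.mapDomain_phiR_apply, smul_eq_mul, key,
            Finsupp.single_apply]
          rcases p with ⟨p1, p2⟩
          by_cases h1 : p1 = graftB [a, b] <;> by_cases h2 : p2 = c <;>
            simp [h1, h2, Prod.ext_iff])]
      exact S15.fsum_pick _ _
    have itid : ∀ (w : (OT ℕ N × OT ℕ N) →₀ K) (a b c : OT ℕ N),
        idTensorNabla nab w (a, b, c) = w (a, graftB [b, c]) := by
      intro w a b c
      rw [idTensorNabla, Finsupp.sum_apply]
      rw [Finsupp.sum_congr (g2 := fun p cp => if p = (a, graftB [b, c]) then cp else 0)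
        (fun p _ => by
          rw [Finsupp.smul_apply, S15.mapDomain_phiL_apply, smul_eq_mul, key,
            Finsupp.single_apply]
          rcases p with ⟨p1, p2⟩
          by_cases h1 : p1 = a <;> by_cases h2 : p2 = graftB [b, c] <;>
            simp [h1, h2, Prod.ext_iff])]
      exact S15.fsum_pick _ _
    intro hco
    have hco' := congrArg
      (fun w : (OT ℕ N × OT ℕ N × OT ℕ N) →₀ K =>
        w ((some (PT.leaf 0) : OT ℕ N), (some (PT.leaf 0) : OT ℕ N), (some (PT.leaf 0) : OT ℕ N)))
      (hco (Finsupp.single (some (PT.node 2 (le_refl 2) hN2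
        (([PT.node 2 (le_refl 2) hN2 (([PT.leaf 0, PT.leaf 0] : List (PT ℕ N)).get),
          PT.leaf 0] : List (PT ℕ N)).get))) 1))
    rw [ntid, itid, key, key] at hco'
    simp only [S15.graftB_ss hN2] at hco'
    rw [Finsupp.single_apply, Finsupp.single_apply] at hco'
    rw [if_pos rfl] at hco'
    rw [if_neg (fun hEq => S15.assoc_ne 0 (Option.some.inj hEq))] at hco'
    exact one_ne_zero hco'

end
end
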